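/- arXiv:1810.09825 — 2 statements merged into one kernel-verified Lean document; each statement's English description precedes it below -/
import Mathlib

section
/- Let N ≥ 1, let c : Fin N → ℝ satisfy 0 ≤ c i ≤ 1 for every i, and let s : Fin N → ℝ. Define the interconnectedness matrix M : Matrix (Fin N) (Fin N) ℝ by M i i = 1 and M i j = c i * c j for i ≠ j, let Δ = diagonal s, and set H = Δᵀ * M * Δ. Then H is positive semidefinite. -/
open Matrix

/-- With `Δ = diagonal s`, the congruence `H = Δᵀ * M * Δ` of the
interconnectedness matrix `M` is positive semidefinite. -/
theorem interconnectedness_congruence_posSemidef (N : ℕ) (hN : 1 ≤ N)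
    (c : Fin N → ℝ) (hc : ∀ i, 0 ≤ c i ∧ c i ≤ 1)
    (s : Fin N → ℝ)
    (M : Matrix (Fin N) (Fin N) ℝ)
    (hMdiag : ∀ i, M i i = 1)
    (hMoff : ∀ i j, i ≠ j → M i j = c i * c j) :
    ((Matrix.diagonal s)ᵀ * M * Matrix.diagonal s).PosSemidef := by
  have hM : M = Matrix.vecMulVec c c + Matrix.diagonal (fun i => 1 - c i ^ 2) := by
    ext i j
    by_cases h : i = j
    · subst h
      simp [hMdiag i, vecMulVec, Matrix.diagonal, sq]
    · simp [hMoff i j h, vecMulVec, Matrix.diagonal, h]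
  have hMpsd : M.PosSemidef := by
    rw [hM]
    apply Matrix.PosSemidef.add
    · have : Matrix.vecMulVec c c = (Matrix.replicateCol (Fin 1) c) * (Matrix.replicateCol (Fin 1) c)ᴴ := by
        ext i j; simp [vecMulVec, Matrix.mul_apply, Matrix.replicateCol]
      rw [this]
      exact Matrix.posSemidef_self_mul_conjTranspose _
    · refine Matrix.posSemidef_diagonal_iff.mpr fun i => ?_
      have := (hc i).1; have := (hc i).2
      nlinarith
  have h := hMpsd.conjTranspose_mul_mul_same (Matrix.diagonal s)
  simpa using h
end

section
/- Let N ≥ 1, let c : Fin N → ℝ satisfy 0 ≤ c i < 1 for every i, and let s : Fin N → ℝ with s i ≠ 0 for every i. Define the interconnectedness matrix M : Matrix (Fin N) (Fin N) ℝ by M i i = 1 and M i j = c i * c j for i ≠ j, let Δ = diagonal s, and set H = Δᵀ * M * Δ. Then H is positive definite. -/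
open Matrix

lemma vecMulVec_posSemidef {N : ℕ} (c : Fin N → ℝ) : (vecMulVec c c).PosSemidef := by
  rw [posSemidef_iff_dotProduct_mulVec]
  constructor
  · ext i j
    simp [conjTranspose_apply, vecMulVec_apply, mul_comm]
  · intro x
    have : dotProduct (star x) (vecMulVec c c *ᵥ x) = (∑ i, c i * x i) ^ 2 := by
      simp only [star_trivial, dotProduct, mulVec, vecMulVec_apply, sq]
      rw [Finset.sum_mul_sum]
      exact Finset.sum_congr rfl fun i _ => by
        rw [Finset.mul_sum]
        exact Finset.sum_congr rfl fun j _ => by ring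
    rw [this]
    positivity

lemma interconnected_posDef {N : ℕ} (c : Fin N → ℝ) (hc : ∀ i, 0 ≤ c i ∧ c i < 1)
    (M : Matrix (Fin N) (Fin N) ℝ)
    (hMdiag : ∀ i, M i i = 1)
    (hMoff : ∀ i j, i ≠ j → M i j = c i * c j) : M.PosDef := by
  have hM : M = diagonal (fun i => 1 - c i ^ 2) + vecMulVec c c := by
    ext i j
    by_cases h : i = j
    · subst h; simp [hMdiag i, vecMulVec_apply]; ring
    · simp [hMoff i j h, diagonal_apply_ne _ h, vecMulVec_apply]
  rw [hM]
  exact Matrix.PosDef.add_posSemidef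
    (Matrix.PosDef.diagonal fun i => by nlinarith [(hc i).1, (hc i).2])
    (vecMulVec_posSemidef c)

/-- With `Δ = diagonal s`, `s i ≠ 0` for all `i`, and `0 ≤ c i < 1` for all
`i`, the congruence `H = Δᵀ * M * Δ` of the interconnectedness matrix `M` is
positive definite. -/
theorem interconnectedness_congruence_posDef (N : ℕ) (hN : 1 ≤ N)
    (c : Fin N → ℝ) (hc : ∀ i, 0 ≤ c i ∧ c i < 1)
    (s : Fin N → ℝ) (hs : ∀ i, s i ≠ 0)
    (M : Matrix (Fin N) (Fin N) ℝ)
    (hMdiag : ∀ i, M i i = 1)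
    (hMoff : ∀ i j, i ≠ j → M i j = c i * c j) :
    ((Matrix.diagonal s)ᵀ * M * Matrix.diagonal s).PosDef := by
  have hMpd := interconnected_posDef c hc M hMdiag hMoff
  have hsym : M.IsSymm := by
    ext i j
    by_cases h : i = j
    · subst h; rfl
    · rw [transpose_apply, hMoff i j h, hMoff j i (Ne.symm h)]; ring
  rw [posDef_iff_dotProduct_mulVec]
  constructor
  · ext i j
    simp only [conjTranspose_apply, star_trivial, diagonal_transpose]
    rw [show ((diagonal s * M * diagonal s) j i) = ((diagonal s * M * diagonal s)ᵀ i j) from rfl]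
    rw [transpose_mul, transpose_mul, diagonal_transpose, hsym.eq]
    simp [Matrix.mul_assoc, mul_assoc]
  · intro x hx
    have hy : (diagonal s) *ᵥ x ≠ 0 := by
      intro h
      apply hx
      funext i
      have := congrFun h i
      simp only [mulVec_diagonal, Pi.zero_apply] at this
      exact (mul_eq_zero.mp this).resolve_left (hs i)
    have key := hMpd.dotProduct_mulVec_pos hy
    rw [star_trivial] at key ⊢
    rw [diagonal_transpose, ← mulVec_mulVec, ← mulVec_mulVec, dotProduct_mulVec x (diagonal s)]
    have : x ᵥ* diagonal s = diagonal s *ᵥ x := by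
      funext i; simp [vecMul_diagonal, mulVec_diagonal, mul_comm]
    rw [this]
    exact key
end
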